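/- Let g : ℝ → ℝ be convex (or concave) and differentiable, and suppose that for every y ∈ ℝ the function z ↦ (g(z) − y)² is convex. If g is twice differentiable, then g''(z) = 0 for all z, i.e., g is affine. -/

import Mathlib

lemma aux_mono_deriv_nonneg {f : ℝ → ℝ} {x : ℝ} (hf : Monotone f)
    (hd : DifferentiableAt ℝ f x) : 0 ≤ deriv f x := by
  have h := hd.hasDerivAt
  rw [hasDerivAt_iff_tendsto_slope] at h
  refine ge_of_tendsto h (Filter.Eventually.of_forall fun z => ?_)
  rw [slope_def_field]
  rcases le_total x z with hz | hz
  · exact div_nonneg (sub_nonneg.mpr (hf hz)) (sub_nonneg.mpr hz)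
  · rw [div_nonneg_iff]
    right
    exact ⟨sub_nonpos.mpr (hf hz), sub_nonpos.mpr hz⟩

/-- If `g` is convex or concave, twice differentiable, and `z ↦ (g(z) - y)²` is convex
for every target `y`, then `g'' ≡ 0`, i.e. `g` is affine. -/
theorem stmt14 (g : ℝ → ℝ)
    (hcc : ConvexOn ℝ Set.univ g ∨ ConcaveOn ℝ Set.univ g)
    (hdiff : Differentiable ℝ g) (hdiff2 : Differentiable ℝ (deriv g))
    (hconv : ∀ y : ℝ, ConvexOn ℝ Set.univ (fun z : ℝ => (g z - y) ^ 2)) :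
    ∀ z : ℝ, deriv (deriv g) z = 0 := by
  intro z
  by_contra hc
  set c := deriv (deriv g) z with hcdef
  set y : ℝ := g z + ((deriv g z) ^ 2 + 1) / c with hy
  set f : ℝ → ℝ := fun w => (g w - y) ^ 2 with hf
  have hfd : ∀ w, HasDerivAt f (2 * (g w - y) * deriv g w) w := by
    intro w
    have h1 : HasDerivAt (fun w => g w - y) (deriv g w) w :=
      (hdiff w).hasDerivAt.sub_const y
    have := h1.fun_pow 2
    simpa using this
  have hderiv : deriv f = fun w => 2 * (g w - y) * deriv g w :=
    funext fun w => (hfd w).deriv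
  have hmono : Monotone (deriv f) := by
    have := (hconv y).monotoneOn_deriv (fun x _ => ((hfd x).differentiableAt))
    exact monotoneOn_univ.mp this
  have hd2 : HasDerivAt (deriv f)
      (2 * deriv g z * deriv g z + 2 * (g z - y) * c) z := by
    rw [hderiv]
    have h1 : HasDerivAt (fun w => 2 * (g w - y)) (2 * deriv g z) z :=
      (((hdiff z).hasDerivAt.sub_const y).const_mul 2)
    have h2 : HasDerivAt (deriv g) c z := (hdiff2 z).hasDerivAt
    have := h1.fun_mul h2
    convert this using 1
    try ring
  have hnn : 0 ≤ deriv (deriv f) z := aux_mono_deriv_nonneg hmono hd2.differentiableAt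
  rw [hd2.deriv] at hnn
  have hgz : g z - y = -(((deriv g z) ^ 2 + 1) / c) := by rw [hy]; ring
  rw [hgz] at hnn
  have : 2 * (-(((deriv g z) ^ 2 + 1) / c)) * c = -2 * ((deriv g z) ^ 2 + 1) := by
    field_simp
  nlinarith [hnn, sq_nonneg (deriv g z), this]
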